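/- Under the assumptions of the main theorem, the count probability of N fully positive outcomes satisfies p_N(N) = Σ over nonnegative integers k_1,...,k_{l_max} with Σ_l l·k_l = N of Π_{l=1}^{l_max} (C_l/N^l)^{k_l} (1/l!)^{k_l} M^{n_l}_{l,k_l}, where n_l = N − Σ_{l'<l} l'·k_{l'} and M^n_{l,k} = n!/((n−lk)! k!). -/

import Mathlib

open MeasureTheory Finset
open scoped Classical

/-- The joint probability `P(𝟙_{E_1}=r_1, …, 𝟙_{E_N}=r_N)`. -/
noncomputable def jointProb {Ω : Type*} [MeasurableSpace Ω] (μ : Measure Ω) {N : ℕ}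
    (E : Fin N → Set Ω) (r : Fin N → Bool) : ℝ :=
  (μ {ω | ∀ i, ω ∈ E i ↔ r i = true}).toReal

/-- A finite sequence of events is symmetric if the joint distribution of the
indicator functions is invariant under permutations of the events. -/
def IsSymmetricEvents {Ω : Type*} [MeasurableSpace Ω] (μ : Measure Ω) {N : ℕ}
    (E : Fin N → Set Ω) : Prop :=
  ∀ (σ : Equiv.Perm (Fin N)) (r : Fin N → Bool),
    jointProb μ E r = jointProb μ E (r ∘ σ)

/-- The probability function of order `k`:
`P_k(r_1,…,r_k) = P(𝟙_{E_1}=r_1, …, 𝟙_{E_k}=r_k)`. -/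
noncomputable def probFun {Ω : Type*} [MeasurableSpace Ω] (μ : Measure Ω) {N : ℕ}
    (E : Fin N → Set Ω) (k : ℕ) (hk : k ≤ N) (r : Fin k → Bool) : ℝ :=
  (μ {ω | ∀ i : Fin k, (ω ∈ E (Fin.castLE hk i) ↔ r i = true)}).toReal

/-- The sum, over all set partitions of `{1,…,k}` into at least two blocks, of the
product over the blocks `B` of `G_{|B|}` evaluated at the arguments `(r_i)_{i∈B}`,
taken in increasing index order. -/
noncomputable def partSum (G : (k : ℕ) → (Fin k → Bool) → ℝ) (k : ℕ)
    (r : Fin k → Bool) : ℝ :=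
  ∑ π : Finset (Finset (Fin k)),
    if ((∀ B ∈ π, B.Nonempty) ∧ (∀ i : Fin k, ∃! B, B ∈ π ∧ i ∈ B)) ∧ 2 ≤ π.card then
      ∏ B ∈ π, G B.card (fun j => r (B.orderIsoOfFin rfl j).1)
    else 0

/-- `M^n_{l,k} = n! / ((n - l·k)! · k!)`, the number of ways to choose `k`
unordered disjoint ordered `l`-tuples from `n` elements, as a real number. -/
noncomputable def Mfac (n l k : ℕ) : ℝ :=
  (n.factorial : ℝ) / (((n - l * k).factorial : ℝ) * ((k.factorial : ℝ)))

/-- `n_l = N - Σ_{l' < l} l'·k_{l'}`. -/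
def nl {lmax : ℕ} (N : ℕ) (k : Fin lmax → ℕ) (l : Fin lmax) : ℕ :=
  N - ∑ l' ∈ Finset.univ.filter (fun l' : Fin lmax => l' < l), (l'.1 + 1) * k l'

section Combi
variable {N lmax : ℕ}

noncomputable def Wt (lmax : ℕ) (f : ℕ → ℝ) (k : Fin lmax → ℕ) : ℝ :=
  ∏ l : Fin lmax,
    f (l.1+1) ^ (k l) / ((((l.1+1).factorial : ℝ)) ^ (k l) * ((k l).factorial : ℝ))

noncomputable def Tsum (N lmax : ℕ) (f : ℕ → ℝ) (n : ℕ) : ℝ :=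
  ∑ k ∈ Fintype.piFinset (fun _ : Fin lmax => Finset.range (N+1)),
    if (∑ l : Fin lmax, (l.1+1) * k l) = n then (n.factorial : ℝ) * Wt lmax f k else 0

lemma sigma_update (j : Fin lmax) (k : Fin lmax → ℕ) (m : ℕ) :
    (∑ l : Fin lmax, (l.1+1) * (Function.update k j m) l) + (j.1+1) * (k j)
      = (∑ l : Fin lmax, (l.1+1) * k l) + (j.1+1) * m := by
  rw [← Finset.sum_erase_add _ _ (mem_univ j), ← Finset.sum_erase_add _ _ (mem_univ j)]
  have hA : ∑ l ∈ univ.erase j, (l.1+1) * (Function.update k j m) l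
      = ∑ l ∈ univ.erase j, (l.1+1) * k l :=
    Finset.sum_congr rfl fun l hl => by rw [Function.update_of_ne (mem_erase.1 hl).1]
  rw [hA, Function.update_self]
  ring

lemma wt_update (f : ℕ → ℝ) (j : Fin lmax) (k : Fin lmax → ℕ) (hk : 1 ≤ k j) :
    f (j.1+1) * Wt lmax f (Function.update k j (k j - 1))
      = (((j.1+1).factorial : ℝ)) * (k j) * Wt lmax f k := by
  obtain ⟨m, hm⟩ : ∃ m, k j = m + 1 := ⟨k j - 1, by omega⟩
  rw [Wt, Wt, ← Finset.mul_prod_erase _ _ (mem_univ j), ← Finset.mul_prod_erase _ _ (mem_univ j)]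
  have hoff : ∏ l ∈ univ.erase j,
        f (l.1+1) ^ ((Function.update k j (k j - 1)) l) /
          ((((l.1+1).factorial : ℝ)) ^ ((Function.update k j (k j - 1)) l) *
            (((Function.update k j (k j - 1)) l).factorial : ℝ))
      = ∏ l ∈ univ.erase j,
        f (l.1+1) ^ (k l) / ((((l.1+1).factorial : ℝ)) ^ (k l) * ((k l).factorial : ℝ)) :=
    Finset.prod_congr rfl fun l hl => by rw [Function.update_of_ne (mem_erase.1 hl).1]
  rw [hoff, Function.update_self, hm]
  simp only [Nat.add_sub_cancel]
  have h1 : (((j.1+1).factorial : ℝ)) ≠ 0 := Nat.cast_ne_zero.2 (Nat.factorial_ne_zero _)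
  have h2 : ((m.factorial : ℝ)) ≠ 0 := Nat.cast_ne_zero.2 (Nat.factorial_ne_zero _)
  have e : (((m+1).factorial : ℝ)) = (m+1) * (m.factorial : ℝ) := by
    rw [Nat.factorial_succ]; push_cast; ring
  rw [e, pow_succ, pow_succ]
  push_cast
  field_simp

lemma Tsum_rec (f : ℕ → ℝ) (hf : ∀ l, lmax < l → f l = 0) {n : ℕ} (hn : 1 ≤ n) (hnN : n ≤ N) :
    Tsum N lmax f n =
      ∑ l ∈ Finset.Icc 1 n, (((n-1).choose (l-1) : ℝ)) * f l * Tsum N lmax f (n - l) := by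
  classical
  set D := Fintype.piFinset (fun _ : Fin lmax => Finset.range (N+1)) with hD
  set g : ℕ → ℝ := fun l => (((n-1).choose (l-1) : ℝ)) * f l * Tsum N lmax f (n - l) with hg
  -- Step A : rewrite the RHS as a sum over Fin lmax
  have stepA : ∑ l ∈ Finset.Icc 1 n, g l
      = ∑ j : Fin lmax, (if j.1+1 ≤ n then g (j.1+1) else 0) := by
    have e1 : ∑ l ∈ Finset.Icc 1 n, g l
        = ∑ l ∈ Finset.Icc 1 (max n lmax), if l ≤ n then g l else 0 := by
      rw [← Finset.sum_subset (Finset.Icc_subset_Icc_right (le_max_left n lmax))]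
      · exact Finset.sum_congr rfl fun l hl => by
          rw [if_pos (Finset.mem_Icc.1 hl).2]
      · intro l hl hl2
        rw [if_neg]
        intro h
        exact hl2 (Finset.mem_Icc.2 ⟨(Finset.mem_Icc.1 hl).1, h⟩)
    have e2 : ∑ j : Fin lmax, (if j.1+1 ≤ n then g (j.1+1) else 0)
        = ∑ l ∈ Finset.Icc 1 (max n lmax), if l ≤ n then g l else 0 := by
      rw [Fin.sum_univ_eq_sum_range (fun j => if j+1 ≤ n then g (j+1) else 0) lmax]
      rw [← Finset.sum_subset (show Finset.Icc 1 lmax ⊆ Finset.Icc 1 (max n lmax) from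
          Finset.Icc_subset_Icc_right (le_max_right n lmax))]
      · apply Finset.sum_nbij' (fun j => j + 1) (fun l => l - 1)
        · intro a ha
          simp only [Finset.mem_range] at ha
          exact Finset.mem_Icc.2 ⟨by omega, by omega⟩
        · intro l hl
          have := Finset.mem_Icc.1 hl
          exact Finset.mem_range.2 (by omega)
        · intro a _; omega
        · intro l hl; have := Finset.mem_Icc.1 hl; omega
        · intro a _; rfl
      · intro l hl hl2
        have h1 := Finset.mem_Icc.1 hl
        have hlm : lmax < l := by
          by_contra h
          exact hl2 (Finset.mem_Icc.2 ⟨h1.1, by omega⟩)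
        split_ifs with h
        · simp [hg, hf l hlm]
        · rfl
    exact e1.trans e2.symm
  rw [stepA]
  -- Step B: expand each summand into a sum over profiles
  have stepB : ∀ j : Fin lmax, (if j.1+1 ≤ n then g (j.1+1) else 0)
      = ∑ k' ∈ D, if (∑ l : Fin lmax, (l.1+1) * k' l) + (j.1+1) = n
          then (((n-1).choose j.1 : ℝ)) * f (j.1+1) *
            (((n - (j.1+1)).factorial : ℝ) * Wt lmax f k') else 0 := by
    intro j
    by_cases hj : j.1+1 ≤ n
    · rw [if_pos hj]
      simp only [hg, Nat.add_sub_cancel]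
      rw [Tsum, Finset.mul_sum]
      apply Finset.sum_congr rfl
      intro k' _
      by_cases hcond : (∑ l : Fin lmax, (l.1+1) * k' l) + (j.1+1) = n
      · rw [if_pos (show (∑ l : Fin lmax, (l.1+1) * k' l) = n - (j.1+1) from by omega),
          if_pos hcond]
      · rw [if_neg (show ¬((∑ l : Fin lmax, (l.1+1) * k' l) = n - (j.1+1)) from by omega),
          if_neg hcond, mul_zero]
    · rw [if_neg hj]
      symm
      apply Finset.sum_eq_zero
      intro k' _
      rw [if_neg]; omega
  -- Step C: reindex each inner sum by adding one `j`-block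
  have stepC : ∀ j : Fin lmax,
      (∑ k' ∈ D, if (∑ l : Fin lmax, (l.1+1) * k' l) + (j.1+1) = n
          then (((n-1).choose j.1 : ℝ)) * f (j.1+1) *
            (((n - (j.1+1)).factorial : ℝ) * Wt lmax f k') else 0)
      = ∑ k ∈ D, if ((∑ l : Fin lmax, (l.1+1) * k l) = n ∧ 1 ≤ k j)
          then (((n-1).choose j.1 : ℝ)) * f (j.1+1) *
            (((n - (j.1+1)).factorial : ℝ) * Wt lmax f (Function.update k j (k j - 1))) else 0 := by
    intro j
    rw [← Finset.sum_filter, ← Finset.sum_filter]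
    apply Finset.sum_nbij' (fun k' => Function.update k' j (k' j + 1))
        (fun k => Function.update k j (k j - 1))
    · intro k' hk'
      obtain ⟨hk'D, hcond⟩ := Finset.mem_filter.1 hk'
      have hterm : (j.1+1) * k' j ≤ ∑ l : Fin lmax, (l.1+1) * k' l :=
        Finset.single_le_sum (f := fun l : Fin lmax => (l.1+1) * k' l)
          (fun l _ => Nat.zero_le _) (mem_univ j)
      have hx : (j.1+1) * (k' j + 1) = (j.1+1) * k' j + (j.1+1) := by ring
      refine Finset.mem_filter.2 ⟨Fintype.mem_piFinset.2 fun l => ?_, ?_, ?_⟩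
      · by_cases hl : l = j
        · subst hl
          rw [Function.update_self, Finset.mem_range]
          have hy : (k' l + 1) ≤ (l.1+1) * (k' l + 1) :=
            Nat.le_mul_of_pos_left _ (by omega)
          omega
        · rw [Function.update_of_ne hl]
          exact Fintype.mem_piFinset.1 hk'D l
      · have := sigma_update j k' (k' j + 1)
        omega
      · rw [Function.update_self]; omega
    · intro k hk
      obtain ⟨hkD, hσk, hkj⟩ := Finset.mem_filter.1 hk
      refine Finset.mem_filter.2 ⟨Fintype.mem_piFinset.2 fun l => ?_, ?_⟩
      · by_cases hl : l = j
        · subst hl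
          rw [Function.update_self, Finset.mem_range]
          have := Finset.mem_range.1 (Fintype.mem_piFinset.1 hkD l)
          omega
        · rw [Function.update_of_ne hl]
          exact Fintype.mem_piFinset.1 hkD l
      · have h1 := sigma_update j k (k j - 1)
        have hterm : (j.1+1) * k j ≤ ∑ l : Fin lmax, (l.1+1) * k l :=
          Finset.single_le_sum (f := fun l : Fin lmax => (l.1+1) * k l)
            (fun l _ => Nat.zero_le _) (mem_univ j)
        obtain ⟨m, hm⟩ : ∃ m, k j = m + 1 := ⟨k j - 1, by omega⟩
        rw [hm] at h1 hterm ⊢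
        have hy : (j.1+1) * (m+1) = (j.1+1) * m + (j.1+1) := by ring
        simp only [Nat.add_sub_cancel] at h1 ⊢
        omega
    · intro k' _
      simp [Function.update_idem, Function.update_self]
    · intro k hk
      obtain ⟨_, _, hkj⟩ := Finset.mem_filter.1 hk
      rw [Function.update_idem, Function.update_self]
      have : k j - 1 + 1 = k j := by omega
      rw [this, Function.update_eq_self]
    · intro k' hk'
      have : Function.update (Function.update k' j (k' j + 1)) j
          ((Function.update k' j (k' j + 1)) j - 1) = k' := by
        simp [Function.update_idem, Function.update_self]
      rw [this]
  -- Step D: collapse the double sum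
  have stepD : ∀ k, k ∈ D → (∑ l : Fin lmax, (l.1+1) * k l) = n →
      (∑ j : Fin lmax, if 1 ≤ k j
          then (((n-1).choose j.1 : ℝ)) * f (j.1+1) *
            (((n - (j.1+1)).factorial : ℝ) * Wt lmax f (Function.update k j (k j - 1))) else 0)
      = (n.factorial : ℝ) * Wt lmax f k := by
    intro k _ hσ
    have e : ∀ j : Fin lmax, (if 1 ≤ k j
          then (((n-1).choose j.1 : ℝ)) * f (j.1+1) *
            (((n - (j.1+1)).factorial : ℝ) * Wt lmax f (Function.update k j (k j - 1))) else 0)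
        = ((((j.1+1) * k j : ℕ)) : ℝ) * (((n-1).factorial : ℝ) * Wt lmax f k) := by
      intro j
      by_cases hkj : 1 ≤ k j
      · rw [if_pos hkj]
        have hterm : (j.1+1) * k j ≤ ∑ l : Fin lmax, (l.1+1) * k l :=
          Finset.single_le_sum (f := fun l : Fin lmax => (l.1+1) * k l)
            (fun l _ => Nat.zero_le _) (mem_univ j)
        have hj1 : j.1+1 ≤ n := by
          have hy : (j.1+1) ≤ (j.1+1) * k j := Nat.le_mul_of_pos_right _ (by omega)
          omega
        have hnat : (n-1).choose j.1 * (n - (j.1+1)).factorial * (j.1+1).factorial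
            = (j.1+1) * (n-1).factorial := by
          have h1 : j.1 ≤ n - 1 := by omega
          have h2 := Nat.choose_mul_factorial_mul_factorial h1
          have h3 : n - (j.1+1) = n - 1 - j.1 := by omega
          rw [h3, Nat.factorial_succ]
          calc (n-1).choose j.1 * (n-1-j.1).factorial * ((j.1+1) * j.1.factorial)
              = (j.1+1) * ((n-1).choose j.1 * j.1.factorial * (n-1-j.1).factorial) := by ring
            _ = (j.1+1) * (n-1).factorial := by rw [h2]
        have hw := wt_update f j k hkj
        calc (((n-1).choose j.1 : ℝ)) * f (j.1+1) *
              (((n - (j.1+1)).factorial : ℝ) * Wt lmax f (Function.update k j (k j - 1)))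
            = (((n-1).choose j.1 : ℝ)) * ((n - (j.1+1)).factorial : ℝ) *
              (f (j.1+1) * Wt lmax f (Function.update k j (k j - 1))) := by ring
          _ = (((n-1).choose j.1 : ℝ)) * ((n - (j.1+1)).factorial : ℝ) *
              ((((j.1+1).factorial : ℝ)) * (k j) * Wt lmax f k) := by rw [hw]
          _ = ((((n-1).choose j.1 * (n - (j.1+1)).factorial * (j.1+1).factorial : ℕ)) : ℝ) *
              (k j) * Wt lmax f k := by push_cast; ring
          _ = ((((j.1+1) * (n-1).factorial : ℕ)) : ℝ) * (k j) * Wt lmax f k := by rw [hnat]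
          _ = ((((j.1+1) * k j : ℕ)) : ℝ) * (((n-1).factorial : ℝ) * Wt lmax f k) := by
              push_cast; ring
      · rw [if_neg hkj]
        have hz : k j = 0 := by omega
        rw [hz]
        push_cast
        ring
    rw [Finset.sum_congr rfl (fun j _ => e j), ← Finset.sum_mul]
    have hcast : (∑ j : Fin lmax, ((((j.1+1) * k j : ℕ)) : ℝ)) = (n : ℝ) := by
      rw [← Nat.cast_sum, hσ]
    rw [hcast, ← mul_assoc]
    congr 1
    rw [← Nat.cast_mul, Nat.mul_factorial_pred (by omega)]
  -- assemble
  have h1 : ∑ j : Fin lmax, (if j.1+1 ≤ n then g (j.1+1) else 0)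
      = ∑ j : Fin lmax, ∑ k ∈ D,
          if ((∑ l : Fin lmax, (l.1+1) * k l) = n ∧ 1 ≤ k j)
          then (((n-1).choose j.1 : ℝ)) * f (j.1+1) *
            (((n - (j.1+1)).factorial : ℝ) * Wt lmax f (Function.update k j (k j - 1))) else 0 :=
    Finset.sum_congr rfl fun j _ => (stepB j).trans (stepC j)
  rw [h1, Finset.sum_comm, Tsum]
  apply Finset.sum_congr rfl
  intro k hk
  by_cases hP : (∑ l : Fin lmax, (l.1+1) * k l) = n
  · rw [if_pos hP, ← stepD k hk hP]
    apply Finset.sum_congr rfl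
    intro j _
    by_cases hQ : 1 ≤ k j
    · rw [if_pos hQ, if_pos (show (∑ l : Fin lmax, (l.1+1) * k l) = n ∧ 1 ≤ k j from ⟨hP, hQ⟩)]
    · rw [if_neg hQ, if_neg (show ¬((∑ l : Fin lmax, (l.1+1) * k l) = n ∧ 1 ≤ k j) from fun h => hQ h.2)]
  · rw [if_neg hP]
    symm
    apply Finset.sum_eq_zero
    intro j _
    rw [if_neg (fun h => hP h.1)]

def IsPart {N : ℕ} (s : Finset (Fin N)) (π : Finset (Finset (Fin N))) : Prop :=
  (∀ B ∈ π, B.Nonempty) ∧ (∀ B ∈ π, B ⊆ s) ∧ ∀ i ∈ s, ∃! B, B ∈ π ∧ i ∈ B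

noncomputable def Ssum {N : ℕ} (f : ℕ → ℝ) (s : Finset (Fin N)) : ℝ :=
  ∑ π : Finset (Finset (Fin N)), if IsPart s π then ∏ B ∈ π, f B.card else 0

lemma isPart_empty_iff {π : Finset (Finset (Fin N))} : IsPart (∅ : Finset (Fin N)) π ↔ π = ∅ := by
  constructor
  · rintro ⟨h1, h2, _⟩
    by_contra h
    obtain ⟨B, hB⟩ := Finset.nonempty_iff_ne_empty.2 h
    obtain ⟨y, hy⟩ := h1 B hB
    exact absurd (h2 B hB hy) (by simp)
  · rintro rfl
    refine ⟨by simp, by simp, by simp⟩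

lemma Ssum_empty (f : ℕ → ℝ) : Ssum f (∅ : Finset (Fin N)) = 1 := by
  rw [Ssum]
  rw [Finset.sum_eq_single_of_mem (∅ : Finset (Finset (Fin N))) (mem_univ _)]
  · simp [isPart_empty_iff]
  · intro π _ hπ
    rw [if_neg]
    simp [isPart_empty_iff, hπ]

lemma Tsum_zero (f : ℕ → ℝ) : Tsum N lmax f 0 = 1 := by
  rw [Tsum]
  rw [Finset.sum_eq_single_of_mem (fun _ : Fin lmax => 0)]
  · simp [Wt]
  · simp [Fintype.mem_piFinset]
  · intro k _ hk
    rw [if_neg]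
    intro h
    apply hk
    funext l
    have := Finset.sum_eq_zero_iff.1 h l (mem_univ _)
    rcases Nat.mul_eq_zero.1 this with h'|h'
    · omega
    · exact h'

lemma Ssum_rec (f : ℕ → ℝ) {s : Finset (Fin N)} {x : Fin N} (hx : x ∈ s) :
    Ssum f s = ∑ B ∈ s.powerset.filter (fun B => x ∈ B), f B.card * Ssum f (s \ B) := by
  classical
  have hS : ∀ (t : Finset (Fin N)), Ssum f t
      = ∑ π ∈ univ.filter (fun π => IsPart t π), ∏ B ∈ π, f B.card := by
    intro t; rw [Ssum, Finset.sum_filter]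
  rw [hS]
  have hR : ∑ B ∈ s.powerset.filter (fun B => x ∈ B), f B.card * Ssum f (s \ B)
      = ∑ p ∈ (s.powerset.filter (fun B => x ∈ B)).sigma
          (fun B => univ.filter (fun π' => IsPart (s \ B) π')),
          f p.1.card * ∏ C ∈ p.2, f C.card := by
    rw [Finset.sum_sigma]
    apply Finset.sum_congr rfl
    intro B _
    rw [hS, Finset.mul_sum]
  rw [hR]
  have key : ∀ π ∈ univ.filter (fun π => IsPart s π), ∃! B, B ∈ π ∧ x ∈ B := by
    intro π hπ
    exact ((Finset.mem_filter.1 hπ).2).2.2 x hx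
  have hins : ∀ p : Σ _ : Finset (Fin N), Finset (Finset (Fin N)),
      p ∈ (s.powerset.filter (fun B => x ∈ B)).sigma
          (fun B => univ.filter (fun π' => IsPart (s \ B) π')) →
      insert p.1 p.2 ∈ univ.filter (fun π => IsPart s π) := by
    rintro ⟨B, π'⟩ hp
    obtain ⟨hB, hπ'⟩ := Finset.mem_sigma.1 hp
    obtain ⟨hBs, hxB⟩ := Finset.mem_filter.1 hB
    have hBs' := Finset.mem_powerset.1 hBs
    have hπ'' : IsPart (s \ B) π' := (Finset.mem_filter.1 hπ').2
    refine Finset.mem_filter.2 ⟨mem_univ _, ?_, ?_, ?_⟩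
    · intro C hC
      rcases Finset.mem_insert.1 hC with rfl | hC'
      · exact ⟨x, hxB⟩
      · exact hπ''.1 C hC'
    · intro C hC
      rcases Finset.mem_insert.1 hC with rfl | hC'
      · exact hBs'
      · exact (hπ''.2.1 C hC').trans (Finset.sdiff_subset)
    · intro i hi
      by_cases hiB : i ∈ B
      · refine ⟨B, ⟨Finset.mem_insert_self _ _, hiB⟩, ?_⟩
        rintro C ⟨hC, hiC⟩
        rcases Finset.mem_insert.1 hC with rfl | hC'
        · rfl
        · exact absurd (Finset.mem_sdiff.1 (hπ''.2.1 C hC' hiC)).2 (fun h => h hiB)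
      · obtain ⟨C, ⟨hCπ', hiC⟩, huniq⟩ := hπ''.2.2 i (Finset.mem_sdiff.2 ⟨hi, hiB⟩)
        refine ⟨C, ⟨Finset.mem_insert_of_mem hCπ', hiC⟩, ?_⟩
        rintro Dd ⟨hD, hiD⟩
        rcases Finset.mem_insert.1 hD with rfl | hD'
        · exact absurd hiD hiB
        · exact huniq Dd ⟨hD', hiD⟩
  refine Finset.sum_bij'
    (fun π hπ => (⟨Finset.choose (fun B => x ∈ B) π (key π hπ),
        π.erase (Finset.choose (fun B => x ∈ B) π (key π hπ))⟩ :
        Σ _ : Finset (Fin N), Finset (Finset (Fin N))))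
    (fun p _ => insert p.1 p.2) ?_ hins ?_ ?_ ?_
  · -- hi
    intro π hπmem
    have hπ : IsPart s π := (Finset.mem_filter.1 hπmem).2
    obtain ⟨hB₀π, hxB₀⟩ := Finset.choose_spec (fun B => x ∈ B) π (key π hπmem)
    set B₀ := Finset.choose (fun B => x ∈ B) π (key π hπmem) with hB₀
    refine Finset.mem_sigma.2 ⟨Finset.mem_filter.2 ⟨Finset.mem_powerset.2 (hπ.2.1 B₀ hB₀π), hxB₀⟩,
      Finset.mem_filter.2 ⟨mem_univ _, ?_, ?_, ?_⟩⟩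
    · intro C hC
      exact hπ.1 C (Finset.mem_of_mem_erase hC)
    · intro C hC y hy
      have hCπ := Finset.mem_of_mem_erase hC
      refine Finset.mem_sdiff.2 ⟨hπ.2.1 C hCπ hy, fun hyB₀ => ?_⟩
      have h3 := hπ.2.2 y (hπ.2.1 C hCπ hy)
      exact (Finset.mem_erase.1 hC).1 (h3.unique ⟨hCπ, hy⟩ ⟨hB₀π, hyB₀⟩)
    · intro i hi
      have hi' := Finset.mem_sdiff.1 hi
      obtain ⟨B, ⟨hBπ, hiB⟩, huniq⟩ := hπ.2.2 i hi'.1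
      refine ⟨B, ⟨Finset.mem_erase.2 ⟨fun h => hi'.2 (h ▸ hiB), hBπ⟩, hiB⟩, ?_⟩
      rintro C ⟨hCe, hiC⟩
      exact huniq C ⟨Finset.mem_of_mem_erase hCe, hiC⟩
  · -- left inverse
    intro π hπmem
    exact Finset.insert_erase (Finset.choose_spec (fun B => x ∈ B) π (key π hπmem)).1
  · -- right inverse
    rintro ⟨B, π'⟩ hp
    obtain ⟨hB, hπ'⟩ := Finset.mem_sigma.1 hp
    obtain ⟨hBs, hxB⟩ := Finset.mem_filter.1 hB
    have hπ'' : IsPart (s \ B) π' := (Finset.mem_filter.1 hπ').2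
    have hBnot : B ∉ π' := fun hBπ' =>
      (Finset.mem_sdiff.1 (hπ''.2.1 B hBπ' hxB)).2 hxB
    have hmem : insert (⟨B, π'⟩ : Σ _ : Finset (Fin N), Finset (Finset (Fin N))).1
        (⟨B, π'⟩ : Σ _ : Finset (Fin N), Finset (Finset (Fin N))).2
        ∈ univ.filter (fun π => IsPart s π) := hins ⟨B, π'⟩ hp
    dsimp only
    have hch : Finset.choose (fun C => x ∈ C) (insert B π') (key _ hmem) = B := by
      obtain ⟨hc1, hc2⟩ := Finset.choose_spec (fun C => x ∈ C) (insert B π') (key _ hmem)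
      rcases Finset.mem_insert.1 hc1 with h | h
      · exact h
      · exact absurd (Finset.mem_sdiff.1 (hπ''.2.1 _ h hc2)).2 (fun hn => hn hxB)
    simp only [hch]
    rw [Finset.erase_insert hBnot]
  · -- values
    intro π hπmem
    exact (Finset.mul_prod_erase π (fun C => f C.card)
      (Finset.choose_spec (fun B => x ∈ B) π (key π hπmem)).1).symm

lemma card_subsets_card {s : Finset (Fin N)} {x : Fin N} (hx : x ∈ s) {l : ℕ} (hl : 1 ≤ l) :
    ((s.powerset.filter (fun B => x ∈ B)).filter (fun B => B.card = l)).card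
      = (s.card - 1).choose (l - 1) := by
  classical
  have hcard : ((s.powerset.filter (fun B => x ∈ B)).filter (fun B => B.card = l)).card
      = ((s.erase x).powersetCard (l-1)).card := by
    refine Finset.card_bij' (fun B _ => B.erase x) (fun A _ => insert x A) ?hi ?hj ?left ?right
    case hi =>
      intro B hB
      obtain ⟨hB1, hBcard⟩ := Finset.mem_filter.1 hB
      obtain ⟨hBs, hxB⟩ := Finset.mem_filter.1 hB1
      refine Finset.mem_powersetCard.2 ⟨Finset.erase_subset_erase x (Finset.mem_powerset.1 hBs), ?_⟩
      rw [Finset.card_erase_of_mem hxB, hBcard]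
    case hj =>
      intro A hA
      obtain ⟨hAs, hAcard⟩ := Finset.mem_powersetCard.1 hA
      have hxA : x ∉ A := fun h => (Finset.mem_erase.1 (hAs h)).1 rfl
      refine Finset.mem_filter.2 ⟨Finset.mem_filter.2 ⟨Finset.mem_powerset.2 ?_, Finset.mem_insert_self _ _⟩, ?_⟩
      · exact Finset.insert_subset hx (hAs.trans (Finset.erase_subset _ _))
      · rw [Finset.card_insert_of_notMem hxA, hAcard]
        omega
    case left =>
      intro B hB
      obtain ⟨hB1, _⟩ := Finset.mem_filter.1 hB
      exact Finset.insert_erase (Finset.mem_filter.1 hB1).2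
    case right =>
      intro A hA
      obtain ⟨hAs, _⟩ := Finset.mem_powersetCard.1 hA
      exact Finset.erase_insert (fun h => (Finset.mem_erase.1 (hAs h)).1 rfl)
  rw [hcard, Finset.card_powersetCard, Finset.card_erase_of_mem hx]

lemma Ssum_eq_Tsum (f : ℕ → ℝ) (hf : ∀ l, lmax < l → f l = 0) (s : Finset (Fin N)) :
    Ssum f s = Tsum N lmax f s.card := by
  classical
  induction s using Finset.strongInduction with
  | _ s IH =>
    rcases Finset.eq_empty_or_nonempty s with rfl | ⟨x, hx⟩
    · rw [Ssum_empty, Finset.card_empty, Tsum_zero]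
    · have hn1 : 1 ≤ s.card := Finset.card_pos.2 ⟨x, hx⟩
      have hnN : s.card ≤ N := by
        have := Finset.card_le_univ s
        simpa using this
      rw [Ssum_rec f hx, Tsum_rec f hf hn1 hnN]
      have hIH : ∀ B ∈ s.powerset.filter (fun B => x ∈ B),
          f B.card * Ssum f (s \ B)
            = f B.card * Tsum N lmax f (s.card - B.card) := by
        intro B hB
        obtain ⟨hBs, hxB⟩ := Finset.mem_filter.1 hB
        have hBs' := Finset.mem_powerset.1 hBs
        have hssub : s \ B ⊂ s := Finset.sdiff_ssubset hBs' ⟨x, hxB⟩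
        rw [IH _ hssub, Finset.card_sdiff_of_subset hBs']
      rw [Finset.sum_congr rfl hIH]
      have hcomp := Finset.sum_comp (fun l => f l * Tsum N lmax f (s.card - l))
        (fun B : Finset (Fin N) => B.card) (s := s.powerset.filter (fun B => x ∈ B))
      rw [hcomp]
      have himg : (s.powerset.filter (fun B => x ∈ B)).image (fun B => B.card)
          ⊆ Finset.Icc 1 s.card := by
        intro b hb
        obtain ⟨B, hB, rfl⟩ := Finset.mem_image.1 hb
        obtain ⟨hBs, hxB⟩ := Finset.mem_filter.1 hB
        exact Finset.mem_Icc.2 ⟨Finset.card_pos.2 ⟨x, hxB⟩,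
          Finset.card_le_card (Finset.mem_powerset.1 hBs)⟩
      rw [Finset.sum_subset himg]
      · apply Finset.sum_congr rfl
        intro l hl
        have hl1 := (Finset.mem_Icc.1 hl).1
        rw [card_subsets_card hx hl1, nsmul_eq_mul]
        ring
      · intro l _ hlimg
        have : (s.powerset.filter (fun B => x ∈ B)).filter (fun B => B.card = l) = ∅ := by
          rw [Finset.filter_eq_empty_iff]
          intro B hB h
          exact hlimg (Finset.mem_image.2 ⟨B, hB, h⟩)
        rw [this]
        simp


lemma prod_div_telescope (g : ℕ → ℝ) (hg : ∀ j, g j ≠ 0) (t : ℕ) :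
    ∏ j ∈ Finset.range t, g j / g (j+1) = g 0 / g t := by
  induction t with
  | zero => simp [div_self (hg 0)]
  | succ t ih =>
    rw [Finset.prod_range_succ, ih, div_mul_div_comm, mul_comm (g 0) (g t),
      mul_div_mul_left _ _ (hg t)]

def mseq {lmax : ℕ} (N : ℕ) (k : Fin lmax → ℕ) (j : ℕ) : ℕ :=
  N - ∑ l ∈ Finset.univ.filter (fun l : Fin lmax => l.1 < j), (l.1 + 1) * k l

lemma prod_Mfac (f : ℕ → ℝ) (k : Fin lmax → ℕ)
    (hk : (∑ l : Fin lmax, (l.1+1) * k l) = N) :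
    (∏ l : Fin lmax, (f (l.1+1)) ^ (k l) * ((1 : ℝ) / (((l.1+1).factorial : ℝ))) ^ (k l) *
        Mfac (nl N k l) (l.1+1) (k l))
      = (N.factorial : ℝ) * Wt lmax f k := by
  classical
  have hnl : ∀ l : Fin lmax, nl N k l = mseq N k l.1 := by
    intro l
    rw [nl, mseq]
    congr 1
  have hm0 : mseq N k 0 = N := by
    rw [mseq]
    simp
  have hmtop : mseq N k lmax = 0 := by
    rw [mseq]
    have h : univ.filter (fun l : Fin lmax => l.1 < lmax) = univ := by
      apply Finset.filter_true_of_mem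
      intro a _
      exact a.2
    rw [h, hk]
    omega
  have hstep : ∀ l : Fin lmax, mseq N k l.1 - (l.1+1) * k l = mseq N k (l.1+1) := by
    intro l
    rw [mseq, mseq]
    have hset : univ.filter (fun a : Fin lmax => a.1 < l.1+1)
        = insert l (univ.filter (fun a : Fin lmax => a.1 < l.1)) := by
      ext a
      simp only [Finset.mem_filter, Finset.mem_insert, mem_univ, true_and]
      constructor
      · intro h
        by_cases ha : a = l
        · exact Or.inl ha
        · exact Or.inr (by
            have : a.1 ≠ l.1 := fun hh => ha (Fin.ext hh)
            omega)
      · rintro (rfl | h)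
        · omega
        · omega
    have hnotmem : l ∉ univ.filter (fun a : Fin lmax => a.1 < l.1) := by
      simp
    rw [hset, Finset.sum_insert hnotmem]
    omega
  have hfac : ∀ l : Fin lmax, Mfac (nl N k l) (l.1+1) (k l)
      = (((mseq N k l.1).factorial : ℝ) / ((mseq N k (l.1+1)).factorial : ℝ)) *
          (1 / ((k l).factorial : ℝ)) := by
    intro l
    rw [Mfac, hnl l, hstep l, div_mul_eq_div_div, div_eq_mul_one_div]
  calc ∏ l : Fin lmax, (f (l.1+1)) ^ (k l) * ((1 : ℝ) / (((l.1+1).factorial : ℝ))) ^ (k l) *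
        Mfac (nl N k l) (l.1+1) (k l)
      = ∏ l : Fin lmax, ((((mseq N k l.1).factorial : ℝ) / ((mseq N k (l.1+1)).factorial : ℝ)) *
          ((f (l.1+1)) ^ (k l) * ((1 : ℝ) / (((l.1+1).factorial : ℝ))) ^ (k l) *
            (1 / ((k l).factorial : ℝ)))) := by
        apply Finset.prod_congr rfl
        intro l _
        rw [hfac l]
        ring
    _ = (∏ l : Fin lmax, (((mseq N k l.1).factorial : ℝ) / ((mseq N k (l.1+1)).factorial : ℝ))) *
          ∏ l : Fin lmax, ((f (l.1+1)) ^ (k l) * ((1 : ℝ) / (((l.1+1).factorial : ℝ))) ^ (k l) *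
            (1 / ((k l).factorial : ℝ))) := Finset.prod_mul_distrib
    _ = (N.factorial : ℝ) * Wt lmax f k := by
        congr 1
        · rw [Fin.prod_univ_eq_prod_range
            (fun j => (((mseq N k j).factorial : ℝ) / ((mseq N k (j+1)).factorial : ℝ))) lmax]
          rw [prod_div_telescope (fun j => ((mseq N k j).factorial : ℝ))
            (fun j => Nat.cast_ne_zero.2 (Nat.factorial_ne_zero _)) lmax]
          rw [hm0, hmtop]
          simp
        · rw [Wt]
          apply Finset.prod_congr rfl
          intro l _
          have h1 : (((l.1+1).factorial : ℝ)) ≠ 0 := Nat.cast_ne_zero.2 (Nat.factorial_ne_zero _)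
          have h2 : (((k l).factorial : ℝ)) ≠ 0 := Nat.cast_ne_zero.2 (Nat.factorial_ne_zero _)
          rw [div_pow, one_pow]
          field_simp

lemma Tsum_top (f : ℕ → ℝ) :
    (∑ k : Fin lmax → Fin (N + 1),
      if (∑ l : Fin lmax, (l.1 + 1) * (k l).1) = N
      then (N.factorial : ℝ) * Wt lmax f (fun l => (k l).1) else 0)
    = Tsum N lmax f N := by
  classical
  rw [Tsum]
  apply Finset.sum_nbij' (fun k (l : Fin lmax) => (k l).1)
    (fun k (l : Fin lmax) => (⟨k l % (N+1), Nat.mod_lt _ (Nat.succ_pos N)⟩ : Fin (N+1)))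
  · intro k _
    exact Fintype.mem_piFinset.2 fun l => Finset.mem_range.2 (k l).isLt
  · intro k _
    exact mem_univ _
  · intro k _
    funext l
    exact Fin.ext (Nat.mod_eq_of_lt (k l).isLt)
  · intro k hk
    funext l
    exact Nat.mod_eq_of_lt (Finset.mem_range.1 (Fintype.mem_piFinset.1 hk l))
  · intro k _
    rfl

end Combi

theorem stmt14 {Ω : Type*} [MeasurableSpace Ω] (μ : Measure Ω) [IsProbabilityMeasure μ]
    {N lmax : ℕ} (hN : 1 ≤ N)
    (E : Fin N → Set Ω) (hE : ∀ i, MeasurableSet (E i))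
    (hsym : IsSymmetricEvents μ E)
    -- `G` is the family of correlation functions of the symmetric sequence of events:
    (G : (k : ℕ) → (Fin k → Bool) → ℝ)
    (hG : ∀ (k : ℕ), 1 ≤ k → ∀ (hk : k ≤ N) (r : Fin k → Bool),
      G k r = probFun μ E k hk r - partSum G k r)
    -- the events are correlated up to order `lmax`, with correlation coefficients `C l`:
    (C : ℕ → ℝ)
    (hC : ∀ l : ℕ, 1 ≤ l → l ≤ N → G l (fun _ => true) = C l / (N : ℝ) ^ l)
    (hCz : ∀ l : ℕ, lmax < l → C l = 0) :
    -- `p_N(N) = P_N(1,…,1)` is given by the sum over profiles `(k_1,…,k_{lmax})`: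
    probFun μ E N le_rfl (fun _ => true) =
      ∑ k : Fin lmax → Fin (N + 1),
        if (∑ l : Fin lmax, (l.1 + 1) * (k l).1) = N then
          ∏ l : Fin lmax,
            (C (l.1 + 1) / (N : ℝ) ^ (l.1 + 1)) ^ ((k l).1) *
              ((1 : ℝ) / ((l.1 + 1).factorial : ℝ)) ^ ((k l).1) *
              Mfac (nl N (fun l' => (k l').1) l) (l.1 + 1) ((k l).1)
        else 0 := by
  classical
  have hNpos : (0:ℕ) < N := hN
  have hf : ∀ l, lmax < l → (fun l => C l / (N : ℝ) ^ l) l = 0 := by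
    intro l hl
    simp [hCz l hl]
  have hprob : probFun μ E N le_rfl (fun _ => true)
      = G N (fun _ => true) + partSum G N (fun _ => true) := by
    have := hG N hN le_rfl (fun _ => true)
    linarith
  have hfG : ∀ B : Finset (Fin N), B.Nonempty →
      G B.card (fun _ => true) = (fun l => C l / (N : ℝ) ^ l) B.card := by
    intro B hB
    have h1 : 1 ≤ B.card := Finset.card_pos.2 hB
    have h2 : B.card ≤ N := by
      have := Finset.card_le_univ B
      simpa using this
    exact hC B.card h1 h2
  have hP0 : ∀ π : Finset (Finset (Fin N)),
      IsPart (univ : Finset (Fin N)) π ↔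
        ((∀ B ∈ π, B.Nonempty) ∧ (∀ i : Fin N, ∃! B, B ∈ π ∧ i ∈ B)) := by
    intro π
    constructor
    · rintro ⟨h1, _, h3⟩
      exact ⟨h1, fun i => h3 i (mem_univ i)⟩
    · rintro ⟨h1, h2⟩
      exact ⟨h1, fun B _ => Finset.subset_univ B, fun i _ => h2 i⟩
  have hparts : Ssum (fun l => C l / (N : ℝ) ^ l) (univ : Finset (Fin N))
      = G N (fun _ => true) + partSum G N (fun _ => true) := by
    rw [Ssum, partSum]
    have split : ∀ π : Finset (Finset (Fin N)),
        (if IsPart (univ : Finset (Fin N)) π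
            then ∏ B ∈ π, (fun l => C l / (N : ℝ) ^ l) B.card else 0)
        = (if π = ({univ} : Finset (Finset (Fin N)))
            then ∏ B ∈ π, (fun l => C l / (N : ℝ) ^ l) B.card else 0)
          + (if ((∀ B ∈ π, B.Nonempty) ∧ (∀ i : Fin N, ∃! B, B ∈ π ∧ i ∈ B)) ∧ 2 ≤ π.card
              then ∏ B ∈ π, (fun l => C l / (N : ℝ) ^ l) B.card else 0) := by
      intro π
      by_cases h2 : π = ({univ} : Finset (Finset (Fin N)))
      · subst h2
        rw [if_pos, if_pos rfl, if_neg, add_zero]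
        · rintro ⟨_, hcard⟩
          simp at hcard
        · refine ⟨?_, ?_, ?_⟩
          · intro B hB
            rw [Finset.mem_singleton.1 hB]
            exact ⟨⟨0, hNpos⟩, mem_univ _⟩
          · intro B hB
            rw [Finset.mem_singleton.1 hB]
          · intro i _
            exact ⟨univ, ⟨Finset.mem_singleton_self _, mem_univ i⟩, by
              rintro B ⟨hB, _⟩
              exact Finset.mem_singleton.1 hB⟩
      · rw [if_neg h2, zero_add]
        by_cases h3 : IsPart (univ : Finset (Fin N)) π
        · have hcard : 2 ≤ π.card := by
            by_contra hcard
            obtain ⟨B, ⟨hBπ, hB0⟩, _⟩ := h3.2.2 ⟨0, hNpos⟩ (mem_univ _)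
            have h1 : 1 ≤ π.card := Finset.card_pos.2 ⟨B, hBπ⟩
            have hone : π.card = 1 := by omega
            obtain ⟨B', hB'⟩ := Finset.card_eq_one.1 hone
            apply h2
            rw [hB']
            congr 1
            apply Finset.eq_univ_of_forall
            intro i
            obtain ⟨Cb, ⟨hCπ, hiC⟩, _⟩ := h3.2.2 i (mem_univ _)
            have hCB : Cb = B' := Finset.mem_singleton.1 (hB' ▸ hCπ)
            exact hCB ▸ hiC
          rw [if_pos h3, if_pos ⟨(hP0 π).1 h3, hcard⟩]
        · rw [if_neg h3, if_neg]
          rintro ⟨hp0, _⟩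
          exact h3 ((hP0 π).2 hp0)
    rw [Finset.sum_congr rfl (fun π _ => split π), Finset.sum_add_distrib]
    congr 1
    · rw [Finset.sum_ite_eq' univ ({univ} : Finset (Finset (Fin N)))
        (fun π => ∏ B ∈ π, (fun l => C l / (N : ℝ) ^ l) B.card)]
      rw [if_pos (Finset.mem_univ _), Finset.prod_singleton]
      rw [Finset.card_univ, Fintype.card_fin]
      exact (hC N hN le_rfl).symm
    · apply Finset.sum_congr rfl
      intro π _
      by_cases hcond : ((∀ B ∈ π, B.Nonempty) ∧ (∀ i : Fin N, ∃! B, B ∈ π ∧ i ∈ B)) ∧ 2 ≤ π.card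
      · rw [if_pos hcond, if_pos hcond]
        apply Finset.prod_congr rfl
        intro B hB
        exact (hfG B (hcond.1.1 B hB)).symm
      · rw [if_neg hcond, if_neg hcond]
  rw [hprob, ← hparts,
    Ssum_eq_Tsum (fun l => C l / (N : ℝ) ^ l) hf (univ : Finset (Fin N))]
  rw [show (univ : Finset (Fin N)).card = N by simp]
  rw [← Tsum_top (fun l => C l / (N : ℝ) ^ l)]
  apply Finset.sum_congr rfl
  intro k _
  by_cases hcond : (∑ l : Fin lmax, (l.1 + 1) * (k l).1) = N
  · rw [if_pos hcond, if_pos hcond]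
    exact (prod_Mfac (fun l => C l / (N : ℝ) ^ l) (fun l => (k l).1) hcond).symm
  · rw [if_neg hcond, if_neg hcond]
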